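/- Let m ≥ 2 be an even integer, k ≥ 1 an integer, and Q = m/2 + k. Define V(r) = 2^{m+k} · sinh(r/2)^{m+k} · cosh(r/2)^{k} for r > 0. Then for every r > 0, V(r)^{−1/2} · (d²/dr²)(V^{1/2})(r) − Q²/4 = (m(Q−1)/8) · sinh(r/2)^{−2} + (k/2)·(k/2 − 1) · sinh(r)^{−2}. -/

import Mathlib

open Real Filter

/-- The radial volume density of a Damek–Ricci space with parameters `m, k`:
`V(r) = 2^{m+k} sinh(r/2)^{m+k} cosh(r/2)^k`. -/
noncomputable def Vdens (m k : ℕ) (r : ℝ) : ℝ :=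
  2 ^ (m + k) * Real.sinh (r / 2) ^ (m + k) * Real.cosh (r / 2) ^ k

private lemma sinh_half_pos {r : ℝ} (hr : 0 < r) : 0 < Real.sinh (r / 2) :=
  Real.sinh_pos_iff.mpr (by linarith)

/-- The basic building block `S^p C^q`. -/
noncomputable def Ffun (p q r : ℝ) : ℝ :=
  Real.sinh (r / 2) ^ p * Real.cosh (r / 2) ^ q

private lemma hasDerivAt_F (p q : ℝ) {r : ℝ} (hr : 0 < r) :
    HasDerivAt (fun x : ℝ => Real.sinh (x / 2) ^ p * Real.cosh (x / 2) ^ q)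
      (p / 2 * (Real.sinh (r / 2) ^ (p - 1) * Real.cosh (r / 2) ^ (q + 1))
        + q / 2 * (Real.sinh (r / 2) ^ (p + 1) * Real.cosh (r / 2) ^ (q - 1))) r := by
  have hS := sinh_half_pos hr
  have hC : (0 : ℝ) < Real.cosh (r / 2) := Real.cosh_pos _
  have hs : HasDerivAt (fun x : ℝ => Real.sinh (x / 2)) (Real.cosh (r / 2) * (1 / 2)) r := by
    simpa using ((hasDerivAt_id r).div_const 2).sinh
  have hc : HasDerivAt (fun x : ℝ => Real.cosh (x / 2)) (Real.sinh (r / 2) * (1 / 2)) r := by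
    simpa using ((hasDerivAt_id r).div_const 2).cosh
  have h1 : HasDerivAt (fun x : ℝ => Real.sinh (x / 2) ^ p)
      (Real.cosh (r / 2) * (1 / 2) * p * Real.sinh (r / 2) ^ (p - 1)) r :=
    hs.rpow_const (Or.inl hS.ne')
  have h2 : HasDerivAt (fun x : ℝ => Real.cosh (x / 2) ^ q)
      (Real.sinh (r / 2) * (1 / 2) * q * Real.cosh (r / 2) ^ (q - 1)) r :=
    hc.rpow_const (Or.inl hC.ne')
  have h := h1.mul h2
  refine h.congr_deriv ?_
  rw [show Real.sinh (r / 2) ^ (p + 1) = Real.sinh (r / 2) ^ p * Real.sinh (r / 2) from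
      Real.rpow_add_one hS.ne' p,
    show Real.cosh (r / 2) ^ (q + 1) = Real.cosh (r / 2) ^ q * Real.cosh (r / 2) from
      Real.rpow_add_one hC.ne' q]
  ring

private lemma sqrt_pow_nat {x : ℝ} (hx : 0 ≤ x) (n : ℕ) :
    Real.sqrt (x ^ n) = x ^ ((n : ℝ) / 2) := by
  rw [Real.sqrt_eq_rpow, ← Real.rpow_natCast x n, ← Real.rpow_mul hx]
  ring_nf

private lemma sqrt_Vdens (m k : ℕ) {r : ℝ} (hr : 0 < r) :
    Real.sqrt (Vdens m k r) =
      (2 : ℝ) ^ (((m : ℝ) + k) / 2) *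
        (Real.sinh (r / 2) ^ (((m : ℝ) + k) / 2) * Real.cosh (r / 2) ^ ((k : ℝ) / 2)) := by
  have hS := (sinh_half_pos hr).le
  have hC : (0 : ℝ) ≤ Real.cosh (r / 2) := (Real.cosh_pos _).le
  have h2 : (0 : ℝ) ≤ 2 := by norm_num
  unfold Vdens
  rw [Real.sqrt_mul (by positivity), Real.sqrt_mul (by positivity),
    sqrt_pow_nat h2, sqrt_pow_nat hS, sqrt_pow_nat hC]
  push_cast
  ring

/-- The first derivative of `√V`. -/
noncomputable def D1fun (a b r : ℝ) : ℝ :=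
  2 ^ a * (a / 2 * (Real.sinh (r / 2) ^ (a - 1) * Real.cosh (r / 2) ^ (b + 1))
    + b / 2 * (Real.sinh (r / 2) ^ (a + 1) * Real.cosh (r / 2) ^ (b - 1)))

private lemma deriv_sqrtV (m k : ℕ) {x : ℝ} (hx : 0 < x) :
    deriv (fun s : ℝ => Real.sqrt (Vdens m k s)) x =
      D1fun (((m : ℝ) + k) / 2) ((k : ℝ) / 2) x := by
  set a : ℝ := ((m : ℝ) + k) / 2
  set b : ℝ := (k : ℝ) / 2
  have hev : (fun s : ℝ => Real.sqrt (Vdens m k s)) =ᶠ[nhds x]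
      fun s : ℝ => (2 : ℝ) ^ a * (Real.sinh (s / 2) ^ a * Real.cosh (s / 2) ^ b) := by
    filter_upwards [eventually_gt_nhds hx] with y hy using sqrt_Vdens m k hy
  rw [hev.deriv_eq]
  exact (((hasDerivAt_F a b hx).const_mul ((2 : ℝ) ^ a)).deriv)

/-- With `Q = m/2 + k`, for every `r > 0`,
`V(r)^{-1/2} (d²/dr²)(V^{1/2})(r) - Q²/4
  = (m(Q-1)/8) sinh(r/2)^{-2} + (k/2)(k/2 - 1) sinh(r)^{-2}`. -/
theorem stmt5 (m k : ℕ) (hm : Even m) (hm2 : 2 ≤ m) (hk : 1 ≤ k) :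
    ∀ r : ℝ, 0 < r →
      (Real.sqrt (Vdens m k r))⁻¹ *
          deriv (deriv (fun s : ℝ => Real.sqrt (Vdens m k s))) r -
          ((m : ℝ) / 2 + k) ^ 2 / 4 =
        (m : ℝ) * (((m : ℝ) / 2 + k) - 1) / 8 * (Real.sinh (r / 2) ^ 2)⁻¹ +
          ((k : ℝ) / 2) * ((k : ℝ) / 2 - 1) * (Real.sinh r ^ 2)⁻¹ := by
  intro r hr
  set a : ℝ := ((m : ℝ) + k) / 2 with ha
  set b : ℝ := (k : ℝ) / 2 with hb
  have hS := sinh_half_pos hr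
  have hC : (0 : ℝ) < Real.cosh (r / 2) := Real.cosh_pos _
  -- second derivative
  have hev : deriv (fun s : ℝ => Real.sqrt (Vdens m k s)) =ᶠ[nhds r] D1fun a b := by
    filter_upwards [eventually_gt_nhds hr] with y hy using deriv_sqrtV m k hy
  have hD : HasDerivAt (D1fun a b)
      ((2:ℝ) ^ a *
        (a / 2 * ((a - 1) / 2 * (Real.sinh (r/2) ^ (a - 1 - 1) * Real.cosh (r/2) ^ (b + 1 + 1))
            + (b + 1) / 2 * (Real.sinh (r/2) ^ (a - 1 + 1) * Real.cosh (r/2) ^ (b + 1 - 1)))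
          + b / 2 * ((a + 1) / 2 * (Real.sinh (r/2) ^ (a + 1 - 1) * Real.cosh (r/2) ^ (b - 1 + 1))
            + (b - 1) / 2 * (Real.sinh (r/2) ^ (a + 1 + 1) * Real.cosh (r/2) ^ (b - 1 - 1))))) r := by
    exact (((hasDerivAt_F (a - 1) (b + 1) hr).const_mul (a / 2)).add
      ((hasDerivAt_F (a + 1) (b - 1) hr).const_mul (b / 2))).const_mul ((2:ℝ) ^ a)
  rw [hev.deriv_eq, hD.deriv, sqrt_Vdens m k hr]
  -- simplify the rpow exponents
  set S := Real.sinh (r / 2) with hSdef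
  set C := Real.cosh (r / 2) with hCdef
  have e1 : S ^ (a - 1 - 1) = S ^ a / S ^ 2 := by
    rw [show a - 1 - 1 = a - 2 by ring, Real.rpow_sub hS, Real.rpow_two]
  have e2 : S ^ (a - 1 + 1) = S ^ a := by rw [show a - 1 + 1 = a by ring]
  have e3 : S ^ (a + 1 - 1) = S ^ a := by rw [show a + 1 - 1 = a by ring]
  have e4 : S ^ (a + 1 + 1) = S ^ a * S ^ 2 := by
    rw [show a + 1 + 1 = a + 2 by ring, Real.rpow_add hS, Real.rpow_two]
  have f1 : C ^ (b + 1 + 1) = C ^ b * C ^ 2 := by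
    rw [show b + 1 + 1 = b + 2 by ring, Real.rpow_add hC, Real.rpow_two]
  have f2 : C ^ (b + 1 - 1) = C ^ b := by rw [show b + 1 - 1 = b by ring]
  have f3 : C ^ (b - 1 + 1) = C ^ b := by rw [show b - 1 + 1 = b by ring]
  have f4 : C ^ (b - 1 - 1) = C ^ b / C ^ 2 := by
    rw [show b - 1 - 1 = b - 2 by ring, Real.rpow_sub hC, Real.rpow_two]
  rw [e1, e2, e3, e4, f1, f2, f3, f4]
  have hsr : Real.sinh r = 2 * S * C := by
    rw [show r = 2 * (r / 2) by ring, Real.sinh_two_mul]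
  have hC2 : C ^ 2 = S ^ 2 + 1 := Real.cosh_sq (r / 2)
  have hsr2 : Real.sinh r ^ 2 = 4 * (S ^ 2 * (S ^ 2 + 1)) := by
    rw [hsr, show (2 * S * C) ^ 2 = 4 * (S ^ 2 * C ^ 2) by ring, hC2]
  rw [hsr2]
  have hu : (0 : ℝ) < S ^ a := Real.rpow_pos_of_pos hS a
  have hv : (0 : ℝ) < C ^ b := Real.rpow_pos_of_pos hC b
  have hw : (0 : ℝ) < (2 : ℝ) ^ a := Real.rpow_pos_of_pos (by norm_num) a
  rw [hC2, ha, hb]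
  field_simp
  ring
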